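/- Let n ≥ 2 and let f : ℝⁿ → ℝⁿ be a C¹ vector field with complete flow Φ whose singular points (zeros) are isolated. Let φ : ℝⁿ → ℝ be continuously differentiable, forward flow-coherent (for all x₁, x₂ with φ(x₁) = φ(x₂) and all t ≥ 0, φ(Φ(t, x₁)) = φ(Φ(t, x₂))), and suppose the Lie derivative satisfies ψ(x) = ⟨∇φ(x), f(x)⟩ < 0 for every x with f(x) ≠ 0. Then every singular point p of f is a critical point of φ, i.e., ∇φ(p) = 0. -/

import Mathlib

open scoped RealInnerProductSpace
open Filter Topology

/-- Let `n ≥ 2`, let `f` be a C¹ vector field with complete flow `Φ` whose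
zeros are isolated, and let `φ` be a C¹, forward flow-coherent function whose Lie
derivative `⟪∇φ(x), f(x)⟫` is negative at every non-singular point. Then every singular
point of `f` is a critical point of `φ`. -/
theorem stmt_5 {n : ℕ} (hn : 2 ≤ n)
    (f : EuclideanSpace ℝ (Fin n) → EuclideanSpace ℝ (Fin n))
    (hf : ContDiff ℝ 1 f)
    (Φ : ℝ → EuclideanSpace ℝ (Fin n) → EuclideanSpace ℝ (Fin n))
    (hΦ0 : ∀ x, Φ 0 x = x)
    (hΦ : ∀ (t : ℝ) (x : EuclideanSpace ℝ (Fin n)),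
      HasDerivAt (fun s => Φ s x) (f (Φ t x)) t)
    (hiso : ∀ p, f p = 0 → ∃ V ∈ nhds p, ∀ x ∈ V, f x = 0 → x = p)
    (φ : EuclideanSpace ℝ (Fin n) → ℝ)
    (hφ : ContDiff ℝ 1 φ)
    (hcoh : ∀ x₁ x₂, φ x₁ = φ x₂ → ∀ t ≥ (0 : ℝ), φ (Φ t x₁) = φ (Φ t x₂))
    (hneg : ∀ x, f x ≠ 0 → ⟪gradient φ x, f x⟫ < 0) :
    ∀ p, f p = 0 → gradient φ p = 0 := by
  intro p hp
  by_contra hg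
  obtain ⟨V, hV, hVp⟩ := hiso p hp
  -- setup for the implicit function theorem
  set f' := fderiv ℝ φ p with hf'def
  have hsd : HasStrictFDerivAt φ f' p := hφ.contDiffAt.hasStrictFDerivAt one_ne_zero
  have hdiff : Differentiable ℝ φ := hφ.differentiable one_ne_zero
  have hfd : ∀ x, f' = fderiv ℝ φ x →
      ∀ v, fderiv ℝ φ x v = ⟪gradient φ x, v⟫ := by
    intro x _ v
    have := (hdiff.differentiableAt (x := x)).hasGradientAt.hasFDerivAt
    rw [this.fderiv]
    simp [InnerProductSpace.toDual_apply_apply]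
  have hfdx : ∀ (x : EuclideanSpace ℝ (Fin n)) v,
      fderiv ℝ φ x v = ⟪gradient φ x, v⟫ := by
    intro x v
    have := (hdiff.differentiableAt (x := x)).hasGradientAt.hasFDerivAt
    rw [this.fderiv]
    simp [InnerProductSpace.toDual_apply_apply]
  have hsur : LinearMap.range f'.toLinearMap = ⊤ := by
    have hne : f' (gradient φ p) ≠ 0 := by
      rw [hfdx p (gradient φ p)]
      exact fun h => hg (inner_self_eq_zero.mp h)
    rw [LinearMap.range_eq_top]
    intro y
    exact ⟨(y / f' (gradient φ p)) • gradient φ p, by simp [div_mul_cancel₀, hne]⟩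
  -- the kernel of f' is nontrivial
  have hker : ∃ z : LinearMap.ker f'.toLinearMap, z ≠ 0 := by
    have h1 := LinearMap.finrank_range_add_finrank_ker
      (f' : EuclideanSpace ℝ (Fin n) →ₗ[ℝ] ℝ)
    rw [show LinearMap.range (f' : EuclideanSpace ℝ (Fin n) →ₗ[ℝ] ℝ)
        = LinearMap.range f'.toLinearMap from rfl,
      show LinearMap.ker (f' : EuclideanSpace ℝ (Fin n) →ₗ[ℝ] ℝ)
        = LinearMap.ker f'.toLinearMap from rfl, hsur] at h1
    simp only [finrank_top, Module.finrank_self, finrank_euclideanSpace_fin] at h1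
    have hpos : 0 < Module.finrank ℝ (LinearMap.ker f'.toLinearMap) := by omega
    have : Nontrivial (LinearMap.ker f'.toLinearMap) := Module.nontrivial_of_finrank_pos hpos
    exact exists_ne 0
  obtain ⟨z, hz⟩ := hker
  -- find x ≠ p near p with φ x = φ p
  set Ψ := hsd.implicitToOpenPartialHomeomorph φ f' hsur with hΨ
  have htend : Tendsto (fun t : ℝ => (φ p, t • z)) (𝓝 0)
      (𝓝 (φ p, (0 : LinearMap.ker f'.toLinearMap))) := by
    refine Tendsto.prodMk_nhds tendsto_const_nhds ?_
    simpa using ((show Continuous fun t : ℝ => t • z from continuous_id.smul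
      (continuous_const : Continuous fun _ : ℝ => z)).tendsto (0 : ℝ))
  have hmape := hsd.map_implicitFunction_eq (f := φ) (f' := f') hsur
  have htarget : Ψ.target ∈ 𝓝 ((φ p, (0 : LinearMap.ker f'.toLinearMap))) :=
    Ψ.open_target.mem_nhds (hsd.mem_implicitToOpenPartialHomeomorph_target hsur)
  have htendx : Tendsto (fun t : ℝ =>
      hsd.implicitFunction φ f' hsur (φ p) (t • z)) (𝓝 0) (𝓝 p) :=
    hsd.tendsto_implicitFunction hsur tendsto_const_nhds (by simpa using
      ((show Continuous fun t : ℝ => t • z from continuous_id.smul (continuous_const : Continuous fun _ : ℝ => z)).tendsto (0:ℝ)))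
  have hev : ∀ᶠ t : ℝ in 𝓝[≠] 0,
      hsd.implicitFunction φ f' hsur (φ p) (t • z) ∈ V ∧
      φ (hsd.implicitFunction φ f' hsur (φ p) (t • z)) = φ p ∧
      (φ p, t • z) ∈ Ψ.target := by
    have e1 := (htendx.eventually (by exact hV)).filter_mono (nhdsWithin_le_nhds (s := ({0}ᶜ : Set ℝ)))
    have e2 := (htend.eventually hmape).filter_mono (nhdsWithin_le_nhds (s := ({0}ᶜ : Set ℝ)))
    have e3 := (htend.eventually htarget).filter_mono (nhdsWithin_le_nhds (s := ({0}ᶜ : Set ℝ)))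
    filter_upwards [e1, e2, e3] with t h1 h2 h3 using ⟨h1, h2, h3⟩
  rcases (hev.and eventually_mem_nhdsWithin).exists with ⟨t, ⟨hxV, hφx, hxt⟩, htm⟩
  have ht0 : t ≠ 0 := htm
  set x := hsd.implicitFunction φ f' hsur (φ p) (t • z) with hxdef
  have hxp : x ≠ p := by
    intro hcontra
    have h1 : Ψ x = (φ p, t • z) := by
      rw [hxdef]
      exact Ψ.right_inv hxt
    have h2 : Ψ p = (φ p, 0) := hsd.implicitToOpenPartialHomeomorph_self hsur
    rw [hcontra, h2] at h1
    have h3 : t • z = 0 := (congrArg Prod.snd h1).symm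
    rcases smul_eq_zero.mp h3 with h | h
    · exact ht0 h
    · exact hz h
  have hfx : f x ≠ 0 := fun h => hxp (hVp x hxV h)
  -- derivative comparison along the flow
  have hder : ∀ y : EuclideanSpace ℝ (Fin n),
      HasDerivAt (fun s => φ (Φ s y)) (⟪gradient φ y, f y⟫) 0 := by
    intro y
    have h1 := hΦ 0 y
    have h2 : HasFDerivAt φ (fderiv ℝ φ (Φ 0 y)) (Φ 0 y) :=
      (hdiff.differentiableAt).hasFDerivAt
    have := h2.comp_hasDerivAt 0 h1
    rw [hΦ0 y] at this
    rw [hfdx] at this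
    exact this
  have heq : ∀ s ∈ Set.Ici (0:ℝ), φ (Φ s x) = φ (Φ s p) := fun s hs =>
    hcoh x p hφx s hs
  have hd1 : HasDerivWithinAt (fun s => φ (Φ s x)) (⟪gradient φ x, f x⟫)
      (Set.Ici 0) 0 := (hder x).hasDerivWithinAt
  have hd2 : HasDerivWithinAt (fun s => φ (Φ s x)) (⟪gradient φ p, f p⟫)
      (Set.Ici 0) 0 :=
    ((hder p).hasDerivWithinAt).congr heq (heq 0 Set.self_mem_Ici)
  have huniq : UniqueDiffWithinAt ℝ (Set.Ici (0:ℝ)) 0 :=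
    uniqueDiffOn_Ici 0 0 Set.self_mem_Ici
  have := (hd1.derivWithin huniq).symm.trans (hd2.derivWithin huniq)
  rw [hp] at this
  simp only [inner_zero_right] at this
  exact absurd this (ne_of_lt (hneg x hfx))
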